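/- Every Galois extension L/K with Galois group isomorphic (as a topological group) to the countable product ∏_{n=1}^∞ ℤ/2ℤ is a vast extension of K. -/

import Mathlib

/-- An algebraic extension `L/K` (inside a fixed algebraic closure of the characteristic-zero
field `K`) is *vast* if `L ≠ K` and for every finite extension `F/K` there is an intermediate
field `M` with `K ⊊ M ⊆ L` linearly disjoint from `F` over `K`. -/
def IsVast {K : Type*} [Field K] (L : IntermediateField K (AlgebraicClosure K)) : Prop :=
  L ≠ ⊥ ∧
    ∀ F : IntermediateField K (AlgebraicClosure K), FiniteDimensional K ↥F →
      ∃ M : IntermediateField K (AlgebraicClosure K), M ≤ L ∧ M ≠ ⊥ ∧ M.LinearDisjoint ↥F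

/-- `ZMod 2` carries the discrete topology. -/
instance : TopologicalSpace (ZMod 2) := ⊥

open IntermediateField Module

/-- `1` and `z` are linearly independent over `F` when `z ∉ F`. -/
lemma IsVast.aux_li {K E : Type*} [Field K] [Field E] [Algebra K E]
    (F : IntermediateField K E) {z : E} (hz : z ∉ F) {d : ℕ} (hd : d = 2) :
    LinearIndependent ↥F (fun i : Fin d => z ^ (i : ℕ)) := by
  subst hd
  rw [Fintype.linearIndependent_iff]
  intro g hg
  have hsum : (g 0 : E) * 1 + (g 1 : E) * z = 0 := by
    have := hg
    rw [Fin.sum_univ_two] at this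
    simpa [Algebra.smul_def, IntermediateField.algebraMap_apply] using this
  have h1 : g 1 = 0 := by
    by_contra h
    apply hz
    have h1E : (g 1 : E) ≠ 0 := fun hc => h (Subtype.ext hc)
    have hz' : z = ((g 1 : E))⁻¹ * (-((g 0 : E))) := by
      rw [inv_mul_eq_div, eq_div_iff h1E]
      linear_combination hsum
    rw [hz']
    exact F.mul_mem (F.inv_mem (g 1).2) (F.neg_mem (g 0).2)
  have h0 : g 0 = 0 := by
    have : (g 0 : E) = 0 := by
      have := hsum
      rw [h1] at this
      simpa using this
    exact Subtype.ext this
  intro i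
  fin_cases i <;> assumption

set_option synthInstance.maxHeartbeats 1000000 in
set_option maxHeartbeats 4000000 in
/-- Every Galois extension `L/K` whose Galois group (with the Krull topology) is isomorphic,
as a topological group, to the countable product `∏_{n=1}^∞ ℤ/2ℤ` (with the product topology)
is a vast extension of `K`. -/
theorem vast_of_galoisGroup_prod_zmod_two {K : Type*} [Field K] [CharZero K]
    (L : IntermediateField K (AlgebraicClosure K)) [IsGalois K ↥L]
    (e : (↥L ≃ₐ[K] ↥L) ≃* (ℕ → Multiplicative (ZMod 2)))
    (he : Continuous e) (he' : Continuous e.symm) :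
    IsVast L := by
  haveI : DiscreteTopology (Multiplicative (ZMod 2)) := ⟨rfl⟩
  set AC := AlgebraicClosure K
  let φ : ℕ → (↥L ≃ₐ[K] ↥L) →* Multiplicative (ZMod 2) :=
    fun n => (Pi.evalMonoidHom (fun _ : ℕ => Multiplicative (ZMod 2)) n).comp e.toMonoidHom
  let H : ℕ → Subgroup (↥L ≃ₐ[K] ↥L) := fun n => (φ n).ker
  have hdi : ∀ x : Multiplicative (ZMod 2), x = 1 ∨ x = Multiplicative.ofAdd 1 := by decide
  have hone : (Multiplicative.ofAdd (1 : ZMod 2)) ≠ 1 := by decide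
  let gelt : ℕ → (↥L ≃ₐ[K] ↥L) :=
    fun n => e.symm (Pi.mulSingle (M := fun _ : ℕ => Multiplicative (ZMod 2)) n
      (Multiplicative.ofAdd (1 : ZMod 2)))
  have hφg : ∀ n m, φ m (gelt n) =
      Pi.mulSingle (M := fun _ : ℕ => Multiplicative (ZMod 2)) n
        (Multiplicative.ofAdd (1 : ZMod 2)) m := by
    intro n m
    simp [φ, gelt]
  have hgn : ∀ n, φ n (gelt n) ≠ 1 := by
    intro n
    rw [hφg n n, Pi.mulSingle_eq_same]
    exact hone
  have hgm : ∀ n m, n ≠ m → φ m (gelt n) = 1 := by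
    intro n m hnm
    rw [hφg n m, Pi.mulSingle_eq_of_ne (Ne.symm hnm)]
  -- the subgroups `H n` are pairwise distinct
  have hHne : ∀ n m, n ≠ m → H n ≠ H m := by
    intro n m hnm hc
    have h1 : gelt n ∈ H m := hgm n m hnm
    rw [← hc] at h1
    exact hgn n h1
  -- maximality of `H n`
  have hmax : ∀ n (S : Subgroup (↥L ≃ₐ[K] ↥L)), H n ≤ S → S ≠ H n → S = ⊤ := by
    intro n S hle hne
    obtain ⟨s, hsS, hsH⟩ : ∃ s ∈ S, s ∉ H n := by
      by_contra hc
      push_neg at hc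
      exact hne (le_antisymm hc hle)
    have hφs : φ n s = Multiplicative.ofAdd 1 := (hdi _).resolve_left hsH
    rw [eq_top_iff]
    intro g _
    rcases hdi (φ n g) with h1 | h1
    · exact hle h1
    · have : g * s⁻¹ ∈ H n := by
        have : φ n (g * s⁻¹) = 1 := by
          rw [map_mul, map_inv, h1, hφs, mul_inv_cancel]
        exact this
      have := mul_mem (hle this) hsS
      simpa using this
  -- `H n` has index 2
  have hidx : ∀ n, (H n).index = 2 := by
    intro n
    rw [Subgroup.index_eq_two_iff]
    refine ⟨gelt n, fun b => ?_⟩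
    rcases hdi (φ n b) with h1 | h1
    · refine Or.inr ⟨h1, fun hc => ?_⟩
      have : φ n (b * gelt n) = 1 := hc
      rw [map_mul, h1, one_mul] at this
      exact hgn n this
    · refine Or.inl ⟨?_, fun hc => hone ((h1.symm.trans hc))⟩
      show φ n (b * gelt n) = 1
      rw [map_mul, h1, hφg n n, Pi.mulSingle_eq_same]
      decide
  -- Part 1 : `L ≠ ⊥`
  have hLbot : L ≠ ⊥ := by
    intro hbot
    have htriv : ∀ σ : ↥L ≃ₐ[K] ↥L, σ = 1 := by
      intro σ
      ext x
      have hx : (x : AC) ∈ (⊥ : IntermediateField K AC) := hbot ▸ x.2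
      obtain ⟨c, hc⟩ := IntermediateField.mem_bot.mp hx
      have hxc : x = algebraMap K ↥L c := by
        apply Subtype.ext
        rw [← hc]
        rfl
      rw [hxc, AlgEquiv.commutes]
      rfl
    have h1 : gelt 0 = 1 := htriv _
    exact hgn 0 (by rw [h1, map_one])
  -- Part 2 : construction of quadratic elements
  have key : ∀ n : ℕ, ∃ y : ↥L, (∀ σ, σ ∈ H n → σ y = y) ∧
      (∃ σ : ↥L ≃ₐ[K] ↥L, σ y ≠ y) ∧ (minpoly K y).natDegree = 2 := by
    intro n
    have hopen : IsOpen ((H n : Set (↥L ≃ₐ[K] ↥L))) := by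
      have : (H n : Set (↥L ≃ₐ[K] ↥L)) = ⇑(φ n) ⁻¹' {1} := by
        ext σ
        simp [H, MonoidHom.mem_ker]
      rw [this]
      have hc : Continuous (φ n) := by
        have : ⇑(φ n) = (fun f => f n) ∘ ⇑e := rfl
        rw [this]
        exact (continuous_apply n).comp he
      exact (isOpen_discrete {1}).preimage hc
    have hnhds : (H n : Set (↥L ≃ₐ[K] ↥L)) ∈ nhds (1 : ↥L ≃ₐ[K] ↥L) :=
      hopen.mem_nhds (H n).one_mem
    rw [krullTopology_mem_nhds_one_iff] at hnhds
    obtain ⟨E, finE, hEsub⟩ := hnhds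
    haveI : FiniteDimensional K ↥E := finE
    set E' : IntermediateField K ↥L := normalClosure K ↥E ↥L with hE'
    haveI : FiniteDimensional K ↥E' := normalClosure.is_finiteDimensional K ↥E ↥L
    haveI : Normal K ↥E' := normalClosure.normal K ↥E ↥L
    haveI : IsGalois K ↥E' := ⟨⟩
    have hE'sub : (E'.fixingSubgroup : Set (↥L ≃ₐ[K] ↥L)) ⊆ H n := by
      refine Set.Subset.trans ?_ hEsub
      intro σ hσ
      exact IntermediateField.fixingSubgroup_antitone (IntermediateField.le_normalClosure E) hσ
    set res : (↥L ≃ₐ[K] ↥L) →* (↥E' ≃ₐ[K] ↥E') := AlgEquiv.restrictNormalHom ↥E' with hres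
    have hressurj : Function.Surjective res := AlgEquiv.restrictNormalHom_surjective ↥L
    have hker : res.ker ≤ H n := by
      intro σ hσ
      apply hE'sub
      rw [SetLike.mem_coe, IntermediateField.mem_fixingSubgroup_iff]
      intro x hx
      have h1 : res σ = 1 := hσ
      have := AlgEquiv.restrictNormalHom_apply E' σ ⟨x, hx⟩
      rw [h1] at this
      simpa using this.symm
    set H' : Subgroup (↥E' ≃ₐ[K] ↥E') := (H n).map res with hH'
    have hcomap : H'.comap res = H n := by
      rw [hH', Subgroup.comap_map_eq]
      exact sup_eq_left.mpr hker
    have hidx' : H'.index = 2 := by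
      rw [← Subgroup.index_comap_of_surjective H' hressurj, hcomap, hidx]
    set M' : IntermediateField K ↥E' := IntermediateField.fixedField H' with hM'
    have hcard : finrank ↥M' ↥E' = Nat.card H' := by
      classical
      rw [IntermediateField.finrank_fixedField_eq_card, Nat.card_eq_fintype_card]
    have htower : finrank K ↥M' * finrank ↥M' ↥E' = finrank K ↥E' :=
      Module.finrank_mul_finrank K ↥M' ↥E'
    have htotal : finrank K ↥E' = Nat.card (↥E' ≃ₐ[K] ↥E') := by
      rw [← IsGalois.card_aut_eq_finrank, Nat.card_eq_fintype_card]
    have hprod : Nat.card H' * H'.index = Nat.card (↥E' ≃ₐ[K] ↥E') :=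
      Subgroup.card_mul_index H'
    have hcardpos : 0 < Nat.card H' := Nat.card_pos
    have hfrM : finrank K ↥M' = 2 := by
      have : finrank K ↥M' * Nat.card H' = 2 * Nat.card H' := by
        rw [← hcard, htower, htotal, ← hprod, hcard, hidx']
        ring
      exact Nat.eq_of_mul_eq_mul_right hcardpos this
    have hM'ne : M' ≠ ⊥ := by
      intro hc
      rw [hc, IntermediateField.finrank_bot] at hfrM
      norm_num at hfrM
    haveI : Finite (IntermediateField K ↥E') :=
      Field.finite_intermediateField_of_exists_primitive_element K ↥E'
        (Field.exists_primitive_element K ↥E')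
    obtain ⟨x, hx⟩ :=
      Field.exists_primitive_element_of_finite_intermediateField (F := K) (E := ↥E') M'
    have hxdeg : (minpoly K x).natDegree = 2 := by
      rw [← IntermediateField.adjoin.finrank (IsIntegral.of_finite K x), hx]
      exact hfrM
    have hxnotbot : ∃ τ : ↥E' ≃ₐ[K] ↥E', τ x ≠ x := by
      by_contra hc
      push_neg at hc
      have hxbot : x ∈ (⊥ : IntermediateField K ↥E') := by
        have h1 : IntermediateField.fixedField (⊤ : Subgroup (↥E' ≃ₐ[K] ↥E')) =
            (⊥ : IntermediateField K ↥E') := by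
          rw [← IntermediateField.fixingSubgroup_bot (F := K) (E := ↥E')]
          exact IsGalois.fixedField_fixingSubgroup ⊥
        rw [← h1]
        exact fun g => hc g
      apply hM'ne
      rw [← hx]
      exact le_bot_iff.mp ((IntermediateField.adjoin_simple_le_iff).mpr hxbot)
    refine ⟨E'.val x, ?_, ?_, ?_⟩
    · intro σ hσ
      have hmem : res σ ∈ H' := Subgroup.mem_map_of_mem res hσ
      have hxM : x ∈ M' := by rw [← hx]; exact IntermediateField.mem_adjoin_simple_self K x
      have hfix : res σ x = x := hxM ⟨res σ, hmem⟩
      have := AlgEquiv.restrictNormalHom_apply E' σ x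
      rw [hfix] at this
      exact this.symm
    · obtain ⟨τ, hτ⟩ := hxnotbot
      obtain ⟨σ, hστ⟩ := hressurj τ
      refine ⟨σ, fun hc => hτ ?_⟩
      have := AlgEquiv.restrictNormalHom_apply E' σ x
      rw [hστ] at this
      apply Subtype.ext
      rw [this]
      exact hc
    · rw [minpoly.algHom_eq E'.val (Subtype.val_injective) x]
      exact hxdeg
  choose y hy1 hy2 hy3 using key
  -- the quadratic subfields of `L` inside the algebraic closure
  let N : ℕ → IntermediateField K AC := fun n => K⟮(y n : AC)⟯
  have hint : ∀ n, IsIntegral K ((y n : AC)) := fun n =>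
    (Algebra.IsAlgebraic.isAlgebraic _).isIntegral
  have hNdeg : ∀ n, (minpoly K ((y n : AC))).natDegree = 2 := by
    intro n
    have h1 : minpoly K (L.val (y n)) = minpoly K (y n) :=
      minpoly.algHom_eq L.val (Subtype.val_injective) (y n)
    have h2 : ((y n : AC)) = L.val (y n) := rfl
    rw [h2, h1]
    exact hy3 n
  have hNle : ∀ n, N n ≤ L := by
    intro n
    rw [IntermediateField.adjoin_simple_le_iff]
    exact (y n).2
  have hNfr : ∀ n, finrank K ↥(N n) = 2 := fun n =>
    (IntermediateField.adjoin.finrank (hint n)).trans (hNdeg n)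
  have hNbot : ∀ n, N n ≠ ⊥ := by
    intro n hc
    have := hNfr n
    rw [hc, IntermediateField.finrank_bot] at this
    norm_num at this
  -- stabilizers
  let S : ℕ → Subgroup (↥L ≃ₐ[K] ↥L) := fun n => MulAction.stabilizer (↥L ≃ₐ[K] ↥L) (y n)
  have hSH : ∀ n, S n = H n := by
    intro n
    have hle : H n ≤ S n := fun σ hσ => hy1 n σ hσ
    have hne : S n ≠ ⊤ := by
      obtain ⟨σ, hσ⟩ := hy2 n
      intro hc
      exact hσ (by have : σ ∈ S n := hc ▸ Subgroup.mem_top σ; exact this)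
    by_contra hne'
    exact hne (hmax n (S n) hle (fun hc => hne' hc))
  -- injectivity of `N`
  have hNinj : Function.Injective N := by
    have hmono : ∀ a b, N a = N b → S b ≤ S a := by
      intro a b hab σ hσ
      have hya : y a ∈ (K⟮y b⟯ : IntermediateField K ↥L) := by
        have h1 : (N b) = IntermediateField.map L.val K⟮y b⟯ := by
          rw [IntermediateField.adjoin_map]
          simp [N]
        have h2 : ((y a : AC)) ∈ N b := by
          rw [← hab]
          exact IntermediateField.mem_adjoin_simple_self K _
        rw [h1] at h2
        obtain ⟨w, hw, hweq⟩ := h2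
        have : w = y a := Subtype.val_injective hweq
        rwa [this] at hw
      have hKb : (K⟮y b⟯ : IntermediateField K ↥L) ≤
          IntermediateField.fixedField (Subgroup.zpowers σ) := by
        rw [IntermediateField.adjoin_simple_le_iff]
        intro g
        exact Subgroup.zpowers_le.mpr hσ g.2
      exact hKb hya ⟨σ, Subgroup.mem_zpowers σ⟩
    intro a b hab
    by_contra hne
    have h1 : S a = S b := le_antisymm (hmono b a hab.symm) (hmono a b hab)
    rw [hSH a, hSH b] at h1
    exact hHne a b hne h1
  constructor
  · exact hLbot
  intro F hF
  haveI : FiniteDimensional K ↥F := hF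
  haveI : Finite (IntermediateField K ↥F) :=
    Field.finite_intermediateField_of_exists_primitive_element K ↥F
      (Field.exists_primitive_element K ↥F)
  -- some `N n` is not contained in `F`
  have hnot : ∃ n, ¬ N n ≤ F := by
    by_contra hc
    push_neg at hc
    have hmem : ∀ n, ((y n : AC)) ∈ F := fun n =>
      hc n (IntermediateField.mem_adjoin_simple_self K _)
    let g : ℕ → IntermediateField K ↥F := fun n => K⟮(⟨(y n : AC), hmem n⟩ : ↥F)⟯
    have hg : ∀ n, IntermediateField.map F.val (g n) = N n := by
      intro n
      rw [IntermediateField.adjoin_map]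
      simp [N, g]
    have hginj : Function.Injective g := by
      intro a b hab
      apply hNinj
      rw [← hg a, ← hg b, hab]
    haveI := Finite.of_injective g hginj
    exact not_finite ℕ
  obtain ⟨n, hn⟩ := hnot
  have hzF : ((y n : AC)) ∉ F := by
    intro hc
    exact hn ((IntermediateField.adjoin_simple_le_iff).mpr hc)
  refine ⟨N n, hNle n, hNbot n, ?_⟩
  set pb := IntermediateField.adjoin.powerBasis (hint n) with hpb
  apply IntermediateField.LinearDisjoint.of_basis_left pb.basis
  have hbasis : (⇑(N n).val ∘ ⇑pb.basis) = fun i : Fin pb.dim => ((y n : AC)) ^ (i : ℕ) := by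
    funext i
    show ((pb.basis i : AC)) = _
    rw [PowerBasis.basis_eq_pow]
    push_cast
    congr 1
  rw [hbasis]
  apply IsVast.aux_li F hzF
  have : pb.dim = (minpoly K ((y n : AC))).natDegree := rfl
  rw [this]
  exact hNdeg n
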